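/- For every fixed ν ∈ ℝ, the modified Bessel function of the second kind satisfies the asymptotic equivalence K_ν(z) ∼ √(π/(2z)) e^{−z} as z → +∞; that is, lim_{z→∞} √(2z/π) · e^{z} · ∫₀^∞ e^{−z cosh t} cosh(νt) dt = 1. -/

import Mathlib

open MeasureTheory Real Filter

/-- Modified Bessel function of the second kind, integral representation. -/
noncomputable def besselK (ν z : ℝ) : ℝ :=
  ∫ t in Set.Ioi (0:ℝ), Real.exp (-z * Real.cosh t) * Real.cosh (ν * t)

lemma cosh_eq_two_sinh_sq (x : ℝ) : Real.cosh x = 2 * Real.sinh (x/2) ^ 2 + 1 := by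
  have h := Real.cosh_two_mul (x/2)
  have h2 := Real.cosh_sq (x/2)
  have : (2:ℝ) * (x/2) = x := by ring
  rw [this] at h
  rw [h, h2]; ring

lemma one_add_sq_half_le_cosh {x : ℝ} (hx : 0 ≤ x) : 1 + x^2/2 ≤ Real.cosh x := by
  have h1 : x/2 ≤ Real.sinh (x/2) := Real.self_le_sinh_iff.mpr (by linarith)
  have h0 : (0:ℝ) ≤ x/2 := by linarith
  rw [cosh_eq_two_sinh_sq]
  nlinarith [sq_nonneg (Real.sinh (x/2) - x/2)]

lemma tendsto_sqrt_atTop : Tendsto Real.sqrt atTop atTop := by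
  apply tendsto_atTop_atTop.mpr
  intro b
  refine ⟨b^2, fun a ha => ?_⟩
  calc b ≤ |b| := le_abs_self b
    _ = Real.sqrt (b^2) := (Real.sqrt_sq_eq_abs b).symm
    _ ≤ Real.sqrt a := Real.sqrt_le_sqrt ha

lemma sinh_div_self_tendsto : Tendsto (fun u : ℝ => Real.sinh u / u) (nhdsWithin 0 {(0:ℝ)}ᶜ) (nhds 1) := by
  have h := Real.hasDerivAt_sinh 0
  rw [hasDerivAt_iff_tendsto_slope] at h
  simp only [Real.cosh_zero] at h
  refine h.congr (fun u => ?_)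
  simp [slope_def_field, Real.sinh_zero, div_eq_inv_mul]

lemma integrable_bound (a : ℝ) :
    Integrable (fun s : ℝ => Real.exp (-s^2/2 + a*s)) := by
  have h : ∀ s : ℝ, Real.exp (-s^2/2 + a*s)
      = Real.exp (a^2/2) * Real.exp (-(1/2) * (s - a)^2) := by
    intro s
    rw [← Real.exp_add]
    ring_nf
  have hint : Integrable (fun s : ℝ => Real.exp (-(1/2) * (s - a)^2)) :=
    (integrable_exp_neg_mul_sq (by norm_num : (0:ℝ) < 1/2)).comp_sub_right a
  exact (hint.const_mul _).congr (by filter_upwards with s using (h s).symm)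

theorem besselK_asymptotic (ν : ℝ) :
    Tendsto (fun z : ℝ => Real.sqrt (2 * z / π) * Real.exp z * besselK ν z)
      atTop (nhds 1) := by
  -- The rescaled integrand
  set F : ℝ → ℝ → ℝ := fun z s =>
    Real.sqrt (2/π) * (Real.exp (z - z * Real.cosh (s / Real.sqrt z)) *
      Real.cosh (ν * (s / Real.sqrt z))) with hF
  -- the limit integrand
  set G : ℝ → ℝ := fun s => Real.sqrt (2/π) * Real.exp (-(1/2) * s^2) with hG
  have hπ : (0:ℝ) < π := Real.pi_pos
  -- Step 1: rewrite via change of variables t = s/√z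
  have key : ∀ᶠ z in atTop, Real.sqrt (2 * z / π) * Real.exp z * besselK ν z
      = ∫ s in Set.Ioi (0:ℝ), F z s := by
    filter_upwards [eventually_gt_atTop (0:ℝ)] with z hz
    have hsz : (0:ℝ) < Real.sqrt z := Real.sqrt_pos.mpr hz
    have hcov := integral_comp_mul_left_Ioi
      (fun t => Real.exp (-z * Real.cosh t) * Real.cosh (ν * t)) 0
      (inv_pos.mpr hsz)
    simp only [mul_zero, smul_eq_mul, inv_inv] at hcov
    have hb : besselK ν z
        = (Real.sqrt z)⁻¹ * ∫ s in Set.Ioi (0:ℝ),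
            Real.exp (-z * Real.cosh ((Real.sqrt z)⁻¹ * s)) *
              Real.cosh (ν * ((Real.sqrt z)⁻¹ * s)) := by
      rw [besselK, hcov]
      field_simp
    rw [hb, show Real.sqrt (2*z/π) * Real.exp z * ((Real.sqrt z)⁻¹ * ∫ s in Set.Ioi (0:ℝ),
            Real.exp (-z * Real.cosh ((Real.sqrt z)⁻¹ * s)) *
              Real.cosh (ν * ((Real.sqrt z)⁻¹ * s)))
        = (Real.sqrt (2*z/π) * Real.exp z * (Real.sqrt z)⁻¹) * ∫ s in Set.Ioi (0:ℝ),
            Real.exp (-z * Real.cosh ((Real.sqrt z)⁻¹ * s)) *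
              Real.cosh (ν * ((Real.sqrt z)⁻¹ * s)) from by ring,
      ← MeasureTheory.integral_const_mul]
    refine MeasureTheory.integral_congr_ae (Filter.Eventually.of_forall fun s => ?_)
    have h1 : (Real.sqrt z)⁻¹ * s = s / Real.sqrt z := by ring
    have h2 : Real.sqrt (2 * z / π) = Real.sqrt (2/π) * Real.sqrt z := by
      rw [← Real.sqrt_mul (by positivity)]
      congr 1; field_simp
    have h3 : Real.exp z * Real.exp (-z * Real.cosh (s / Real.sqrt z))
        = Real.exp (z - z * Real.cosh (s / Real.sqrt z)) := by
      rw [← Real.exp_add]; ring_nf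
    simp only [hF, h1, h2, ← h3]
    have hne : Real.sqrt z ≠ 0 := ne_of_gt hsz
    field_simp
  -- Step 2: DCT
  have hlim : Tendsto (fun z => ∫ s in Set.Ioi (0:ℝ), F z s) atTop
      (nhds (∫ s in Set.Ioi (0:ℝ), G s)) := by
    apply MeasureTheory.tendsto_integral_filter_of_dominated_convergence
      (fun s => Real.sqrt (2/π) * (Real.exp (-s^2/2) * Real.cosh (ν * s)))
    · -- measurability
      filter_upwards [eventually_gt_atTop (0:ℝ)] with z hz
      apply Continuous.aestronglyMeasurable
      fun_prop
    · -- domination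
      filter_upwards [eventually_ge_atTop (1:ℝ)] with z hz
      filter_upwards [ae_restrict_mem measurableSet_Ioi] with s hs
      have hs0 : (0:ℝ) < s := hs
      have hz0 : (0:ℝ) < z := by linarith
      have hsz : (1:ℝ) ≤ Real.sqrt z := by
        rw [show (1:ℝ) = Real.sqrt 1 by simp]
        exact Real.sqrt_le_sqrt hz
      have hszpos : (0:ℝ) < Real.sqrt z := by linarith
      have hF_nonneg : 0 ≤ F z s := by
        apply mul_nonneg (Real.sqrt_nonneg _)
        exact mul_nonneg (Real.exp_pos _).le (by positivity)
      rw [Real.norm_eq_abs, abs_of_nonneg hF_nonneg, hF]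
      apply mul_le_mul_of_nonneg_left _ (Real.sqrt_nonneg _)
      have hexp : Real.exp (z - z * Real.cosh (s / Real.sqrt z)) ≤ Real.exp (-s^2/2) := by
        apply Real.exp_le_exp.mpr
        have hq : 1 + (s / Real.sqrt z)^2/2 ≤ Real.cosh (s / Real.sqrt z) :=
          one_add_sq_half_le_cosh (by positivity)
        have hzz : z * (s / Real.sqrt z)^2 = s^2 := by
          rw [div_pow, Real.sq_sqrt hz0.le]
          field_simp
        nlinarith
      have hcosh : Real.cosh (ν * (s / Real.sqrt z)) ≤ Real.cosh (ν * s) := by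
        rw [Real.cosh_le_cosh]
        rw [abs_mul, abs_mul]
        apply mul_le_mul_of_nonneg_left _ (abs_nonneg ν)
        rw [abs_of_pos (by positivity : (0:ℝ) < s / Real.sqrt z), abs_of_pos hs0]
        rw [div_le_iff₀ hszpos]
        nlinarith
      exact mul_le_mul hexp hcosh (by positivity) (Real.exp_pos _).le
    · -- integrability of bound
      apply Integrable.integrableOn
      have : (fun s : ℝ => Real.sqrt (2/π) * (Real.exp (-s^2/2) * Real.cosh (ν * s)))
          = fun s => Real.sqrt (2/π) / 2 *
            (Real.exp (-s^2/2 + ν*s) + Real.exp (-s^2/2 + (-ν)*s)) := by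
        ext s
        rw [Real.cosh_eq, Real.exp_add, Real.exp_add]
        ring_nf
      rw [this]
      exact (((integrable_bound ν).add (integrable_bound (-ν))).const_mul _)
    · -- pointwise limit
      filter_upwards [ae_restrict_mem measurableSet_Ioi] with s hs
      have hs0 : (0:ℝ) < s := hs
      -- s/√z → 0
      have hu : Tendsto (fun z : ℝ => s / Real.sqrt z) atTop (nhds 0) := by
        apply Tendsto.div_atTop tendsto_const_nhds _root_.tendsto_sqrt_atTop
      have hu2 : Tendsto (fun z : ℝ => s / (2 * Real.sqrt z)) atTop (nhds 0) := by
        have : Tendsto (fun z : ℝ => 2 * Real.sqrt z) atTop atTop :=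
          _root_.tendsto_sqrt_atTop.const_mul_atTop (by norm_num)
        exact Tendsto.div_atTop tendsto_const_nhds this
      -- cosh (ν s/√z) → 1
      have hc : Tendsto (fun z : ℝ => Real.cosh (ν * (s / Real.sqrt z))) atTop (nhds 1) := by
        have h0 : Tendsto (fun z : ℝ => ν * (s / Real.sqrt z)) atTop (nhds 0) := by
          have := hu.const_mul ν
          rwa [mul_zero] at this
        have := (Real.continuous_cosh.tendsto 0).comp h0
        simpa [Real.cosh_zero, Function.comp_def] using this
      -- z - z cosh(s/√z) → -s²/2
      have hb : Tendsto (fun z : ℝ => z - z * Real.cosh (s / Real.sqrt z)) atTop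
          (nhds (-(1/2) * s^2)) := by
        have hslope : Tendsto (fun z : ℝ => Real.sinh (s / (2 * Real.sqrt z)) / (s / (2 * Real.sqrt z)))
            atTop (nhds 1) := by
          apply sinh_div_self_tendsto.comp
          apply tendsto_nhdsWithin_of_tendsto_nhds_of_eventually_within _ hu2
          filter_upwards [eventually_gt_atTop (0:ℝ)] with z hz
          have : (0:ℝ) < Real.sqrt z := Real.sqrt_pos.mpr hz
          simp only [Set.mem_compl_iff, Set.mem_singleton_iff]
          positivity
        have heq : ∀ᶠ z in atTop, z - z * Real.cosh (s / Real.sqrt z)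
            = -(1/2) * s^2 * (Real.sinh (s / (2 * Real.sqrt z)) / (s / (2 * Real.sqrt z)))^2 := by
          filter_upwards [eventually_gt_atTop (0:ℝ)] with z hz
          have hszpos : (0:ℝ) < Real.sqrt z := Real.sqrt_pos.mpr hz
          have h1 : s / Real.sqrt z / 2 = s / (2 * Real.sqrt z) := by ring
          have h2 : (Real.sqrt z)^2 = z := Real.sq_sqrt hz.le
          have hu2sq : (s / (2 * Real.sqrt z))^2 = s^2 / (4 * z) := by
            rw [div_pow, mul_pow, h2]; norm_num
          rw [cosh_eq_two_sinh_sq (s / Real.sqrt z), h1, div_pow, hu2sq]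
          have hsne : s ≠ 0 := ne_of_gt hs0
          have hzne : z ≠ 0 := ne_of_gt hz
          field_simp
          ring
        have : Tendsto (fun z : ℝ => -(1/2) * s^2 *
            (Real.sinh (s / (2 * Real.sqrt z)) / (s / (2 * Real.sqrt z)))^2) atTop
            (nhds (-(1/2) * s^2 * 1^2)) := by
          exact tendsto_const_nhds.mul ((hslope.pow 2))
        simp only [one_pow, mul_one] at this
        exact this.congr' (heq.mono fun z h => h.symm)
      have hexp : Tendsto (fun z : ℝ => Real.exp (z - z * Real.cosh (s / Real.sqrt z))) atTop
          (nhds (Real.exp (-(1/2) * s^2))) := (Real.continuous_exp.tendsto _).comp hb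
      have := (tendsto_const_nhds (α := ℝ) (x := Real.sqrt (2/π))).mul (hexp.mul hc)
      simpa [hF, hG] using this
  -- Step 3: compute the limit integral
  have hGint : ∫ s in Set.Ioi (0:ℝ), G s = 1 := by
    rw [hG]
    simp only []
    rw [MeasureTheory.integral_const_mul, integral_gaussian_Ioi]
    have h4 : Real.sqrt (2/π) * Real.sqrt (π/(1/2)) = 2 := by
      rw [← Real.sqrt_mul (by positivity), show (2/π)*(π/(1/2)) = 4 by field_simp; ring,
        show (4:ℝ) = 2^2 by norm_num, Real.sqrt_sq (by norm_num : (0:ℝ) ≤ 2)]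
    linear_combination h4 / 2
  rw [← hGint]
  exact hlim.congr' (key.mono fun z h => h.symm)
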